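/- arXiv:1209.4383 — 2 statements merged into one kernel-verified Lean document; each statement's English description precedes it below -/
import Mathlib

section
/- For any discrete random variables X₁, X₂ with finite alphabets and any random variable U such that X₁ ↔ U ↔ X₂ forms a Markov chain (X₁ and X₂ are conditionally independent given U), the mutual information satisfies I(X₁, X₂; U) ≥ I(X₁; X₂). -/
open Finset Real
open scoped Classical BigOperators

/-- Shannon entropy (base 2) of a finitely supported distribution. -/
noncomputable def Hent {α : Type*} [Fintype α] (q : α → ℝ) : ℝ :=
  -∑ a, q a * Real.logb 2 (q a)

/-- Mutual information `I(A;B)` of a joint distribution on `α × β`. -/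
noncomputable def MI {α β : Type*} [Fintype α] [Fintype β] (q : α × β → ℝ) : ℝ :=
  Hent (fun a => ∑ b, q (a, b)) + Hent (fun b => ∑ a, q (a, b)) - Hent q

/-- Conditional mutual information `I(A;B|C)` of a joint distribution on `α × β × γ`. -/
noncomputable def CMI {α β γ : Type*} [Fintype α] [Fintype β] [Fintype γ]
    (q : α × β × γ → ℝ) : ℝ :=
  Hent (fun ac : α × γ => ∑ b, q (ac.1, b, ac.2))
    + Hent (fun bc : β × γ => ∑ a, q (a, bc.1, bc.2))
    - Hent q - Hent (fun c : γ => ∑ a, ∑ b, q (a, b, c))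

/-- Conditional entropy `H(A|B)` of a joint distribution on `α × β`. -/
noncomputable def condH {α β : Type*} [Fintype α] [Fintype β] (q : α × β → ℝ) : ℝ :=
  Hent q - Hent (fun b => ∑ a, q (a, b))

lemma sum_rot {α β γ : Type*} [Fintype α] [Fintype β] [Fintype γ] (f : α → β → γ → ℝ) :
    ∑ a, ∑ b, ∑ c, f a b c = ∑ c, ∑ a, ∑ b, f a b c := by
  calc ∑ a, ∑ b, ∑ c, f a b c = ∑ a, ∑ c, ∑ b, f a b c :=
        Finset.sum_congr rfl (fun _ _ => Finset.sum_comm)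
    _ = ∑ c, ∑ a, ∑ b, f a b c := Finset.sum_comm

lemma cmi_core {α β γ : Type*} [Fintype α] [Fintype β] [Fintype γ]
    (q : α × β × γ → ℝ) (hq0 : ∀ x, 0 ≤ q x) :
    Hent q + Hent (fun c : γ => ∑ a, ∑ b, q (a, b, c))
      ≤ Hent (fun ac : α × γ => ∑ b, q (ac.1, b, ac.2))
        + Hent (fun bc : β × γ => ∑ a, q (a, bc.1, bc.2)) := by
  set S := Real.log 2 with hSdef
  have hS : 0 < S := Real.log_pos one_lt_two
  set pac : α → γ → ℝ := fun a c => ∑ b, q (a, b, c) with hpac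
  set pbc : β → γ → ℝ := fun b c => ∑ a, q (a, b, c) with hpbc
  set pc : γ → ℝ := fun c => ∑ a, ∑ b, q (a, b, c) with hpc
  have hpac0 : ∀ a c, 0 ≤ pac a c := fun a c => Finset.sum_nonneg fun _ _ => hq0 _
  have hpbc0 : ∀ b c, 0 ≤ pbc b c := fun b c => Finset.sum_nonneg fun _ _ => hq0 _
  have hpc0 : ∀ c, 0 ≤ pc c := fun c =>
    Finset.sum_nonneg fun _ _ => Finset.sum_nonneg fun _ _ => hq0 _
  have hqac : ∀ a b c, q (a, b, c) ≤ pac a c := fun a b c =>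
    Finset.single_le_sum (fun i _ => hq0 (a, i, c)) (mem_univ b)
  have hqbc : ∀ a b c, q (a, b, c) ≤ pbc b c := fun a b c =>
    Finset.single_le_sum (fun i _ => hq0 (i, b, c)) (mem_univ a)
  have hacpc : ∀ a c, pac a c ≤ pc c := fun a c =>
    Finset.single_le_sum (fun i _ => hpac0 i c) (mem_univ a)
  -- pointwise key inequality
  have key : ∀ a b c,
      (if q (a, b, c) = 0 then 0 else q (a, b, c) - pac a c * pbc b c / pc c) / S
        ≤ q (a, b, c) * Real.logb 2 (q (a, b, c)) + q (a, b, c) * Real.logb 2 (pc c)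
          - q (a, b, c) * Real.logb 2 (pac a c) - q (a, b, c) * Real.logb 2 (pbc b c) := by
    intro a b c
    by_cases h : q (a, b, c) = 0
    · simp [h]
    · have hq : 0 < q (a, b, c) := lt_of_le_of_ne (hq0 _) (Ne.symm h)
      have h1 : 0 < pac a c := lt_of_lt_of_le hq (hqac a b c)
      have h2 : 0 < pbc b c := lt_of_lt_of_le hq (hqbc a b c)
      have h3 : 0 < pc c := lt_of_lt_of_le h1 (hacpc a c)
      rw [if_neg h]
      set t : ℝ := q (a, b, c) * pc c / (pac a c * pbc b c) with ht
      have htpos : 0 < t := div_pos (mul_pos hq h3) (mul_pos h1 h2)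
      have hlogt : Real.log t = Real.log (q (a, b, c)) + Real.log (pc c)
          - Real.log (pac a c) - Real.log (pbc b c) := by
        rw [ht, Real.log_div (by positivity) (by positivity),
          Real.log_mul hq.ne' h3.ne', Real.log_mul h1.ne' h2.ne']
        ring
      have hineq : 1 - t⁻¹ ≤ Real.log t := Real.one_sub_inv_le_log_of_pos htpos
      have hmul : q (a, b, c) * (1 - t⁻¹) ≤ q (a, b, c) * Real.log t :=
        mul_le_mul_of_nonneg_left hineq hq.le
      have hl : q (a, b, c) * (1 - t⁻¹) = q (a, b, c) - pac a c * pbc b c / pc c := by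
        rw [ht]
        field_simp
      have hr : (q (a, b, c) * Real.log t) / S
          = q (a, b, c) * Real.logb 2 (q (a, b, c)) + q (a, b, c) * Real.logb 2 (pc c)
            - q (a, b, c) * Real.logb 2 (pac a c) - q (a, b, c) * Real.logb 2 (pbc b c) := by
        simp only [Real.logb, hSdef, hlogt]
        ring
      rw [← hr, ← hl]
      exact (div_le_div_iff_of_pos_right hS).mpr hmul
  -- summed inequality
  have main : ∑ a, ∑ b, ∑ c,
      (if q (a, b, c) = 0 then 0 else q (a, b, c) - pac a c * pbc b c / pc c) / S
      ≤ ∑ a, ∑ b, ∑ c,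
        (q (a, b, c) * Real.logb 2 (q (a, b, c)) + q (a, b, c) * Real.logb 2 (pc c)
          - q (a, b, c) * Real.logb 2 (pac a c) - q (a, b, c) * Real.logb 2 (pbc b c)) :=
    Finset.sum_le_sum fun a _ => Finset.sum_le_sum fun b _ =>
      Finset.sum_le_sum fun c _ => key a b c
  -- the lower bound side is nonnegative
  have lower : 0 ≤ ∑ a, ∑ b, ∑ c,
      (if q (a, b, c) = 0 then 0 else q (a, b, c) - pac a c * pbc b c / pc c) / S := by
    simp only [← Finset.sum_div]
    apply div_nonneg _ hS.le
    have hsplit : ∀ a b c,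
        (if q (a, b, c) = 0 then (0:ℝ) else q (a, b, c) - pac a c * pbc b c / pc c)
          = (if q (a, b, c) = 0 then (0:ℝ) else q (a, b, c))
            - (if q (a, b, c) = 0 then (0:ℝ) else pac a c * pbc b c / pc c) := by
      intro a b c; by_cases h : q (a, b, c) = 0 <;> simp [h]
    simp only [hsplit, Finset.sum_sub_distrib]
    have hq_eq : ∀ a b c, (if q (a, b, c) = 0 then (0:ℝ) else q (a, b, c)) = q (a, b, c) := by
      intro a b c; by_cases h : q (a, b, c) = 0 <;> simp [h]
    simp only [hq_eq]
    have hle : ∑ a, ∑ b, ∑ c, (if q (a, b, c) = 0 then (0:ℝ) else pac a c * pbc b c / pc c)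
        ≤ ∑ a, ∑ b, ∑ c, (if pc c = 0 then (0:ℝ) else pac a c * pbc b c / pc c) := by
      refine Finset.sum_le_sum fun a _ => Finset.sum_le_sum fun b _ =>
        Finset.sum_le_sum fun c _ => ?_
      by_cases h : q (a, b, c) = 0
      · rw [if_pos h]
        by_cases hc : pc c = 0
        · rw [if_pos hc]
        · rw [if_neg hc]
          exact div_nonneg (mul_nonneg (hpac0 a c) (hpbc0 b c)) (hpc0 c)
      · have hq : 0 < q (a, b, c) := lt_of_le_of_ne (hq0 _) (Ne.symm h)
        have hc : pc c ≠ 0 := (lt_of_lt_of_le (lt_of_lt_of_le hq (hqac a b c)) (hacpc a c)).ne'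
        rw [if_neg h, if_neg hc]
    have heval : ∑ a, ∑ b, ∑ c, (if pc c = 0 then (0:ℝ) else pac a c * pbc b c / pc c)
        = ∑ a, ∑ b, ∑ c, q (a, b, c) := by
      rw [sum_rot (fun a b c => if pc c = 0 then (0:ℝ) else pac a c * pbc b c / pc c),
        sum_rot (fun a b c => q (a, b, c))]
      refine Finset.sum_congr rfl fun c _ => ?_
      by_cases hc : pc c = 0
      · simp only [if_pos hc]
        rw [hpc] at hc  -- unused maybe
        simp only [Finset.sum_const_zero]
        exact hc.symm
      · simp only [if_neg hc]
        have : ∑ a, ∑ b, pac a c * pbc b c / pc c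
            = (∑ a, pac a c) * (∑ b, pbc b c) / pc c := by
          simp only [← Finset.sum_div, ← Finset.mul_sum, ← Finset.sum_mul]
        rw [this]
        have h1 : ∑ a, pac a c = pc c := rfl
        have h2 : ∑ b, pbc b c = pc c := by
          rw [hpbc, hpc]; exact Finset.sum_comm
        rw [h1, h2, mul_div_assoc, div_self hc, mul_one]
    linarith
  -- rewrite the four entropies as triple sums
  have e1 : Hent q = -∑ a, ∑ b, ∑ c, q (a, b, c) * Real.logb 2 (q (a, b, c)) := by
    unfold Hent
    simp only [Fintype.sum_prod_type]
  have e2 : Hent (fun c : γ => ∑ a, ∑ b, q (a, b, c))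
      = -∑ a, ∑ b, ∑ c, q (a, b, c) * Real.logb 2 (pc c) := by
    unfold Hent
    rw [sum_rot (fun a b c => q (a, b, c) * Real.logb 2 (pc c)), neg_inj]
    refine Finset.sum_congr rfl fun c _ => ?_
    rw [Finset.sum_mul]
    exact Finset.sum_congr rfl fun a _ => Finset.sum_mul _ _ _
  have e3 : Hent (fun ac : α × γ => ∑ b, q (ac.1, b, ac.2))
      = -∑ a, ∑ b, ∑ c, q (a, b, c) * Real.logb 2 (pac a c) := by
    unfold Hent
    simp only [Fintype.sum_prod_type, neg_inj]
    refine Finset.sum_congr rfl fun a _ => ?_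
    rw [Finset.sum_comm]
    exact Finset.sum_congr rfl fun c _ => Finset.sum_mul _ _ _
  have e4 : Hent (fun bc : β × γ => ∑ a, q (a, bc.1, bc.2))
      = -∑ a, ∑ b, ∑ c, q (a, b, c) * Real.logb 2 (pbc b c) := by
    unfold Hent
    simp only [Fintype.sum_prod_type, neg_inj]
    rw [← sum_rot (fun b c a => q (a, b, c) * Real.logb 2 (pbc b c))]
    exact Finset.sum_congr rfl fun b _ => Finset.sum_congr rfl fun c _ =>
      Finset.sum_mul _ _ _
  have split : ∑ a, ∑ b, ∑ c,
      (q (a, b, c) * Real.logb 2 (q (a, b, c)) + q (a, b, c) * Real.logb 2 (pc c)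
        - q (a, b, c) * Real.logb 2 (pac a c) - q (a, b, c) * Real.logb 2 (pbc b c))
      = (∑ a, ∑ b, ∑ c, q (a, b, c) * Real.logb 2 (q (a, b, c)))
        + (∑ a, ∑ b, ∑ c, q (a, b, c) * Real.logb 2 (pc c))
        - (∑ a, ∑ b, ∑ c, q (a, b, c) * Real.logb 2 (pac a c))
        - (∑ a, ∑ b, ∑ c, q (a, b, c) * Real.logb 2 (pbc b c)) := by
    simp only [Finset.sum_sub_distrib, Finset.sum_add_distrib]
  rw [e1, e2, e3, e4]
  rw [split] at main
  linarith [le_trans lower main]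

lemma markov_hent {X1 X2 U : Type*} [Fintype X1] [Fintype X2] [Fintype U]
    (p : X1 × X2 × U → ℝ) (hp0 : ∀ x, 0 ≤ p x)
    (hMarkov : ∀ x1 x2 u, p (x1, x2, u) * (∑ a, ∑ b, p (a, b, u))
        = (∑ b, p (x1, b, u)) * (∑ a, p (a, x2, u))) :
    Hent (fun x : (X1 × X2) × U => p (x.1.1, x.1.2, x.2))
      = Hent (fun y : X1 × U => ∑ b, p (y.1, b, y.2))
        + Hent (fun y : X2 × U => ∑ a, p (a, y.1, y.2))
        - Hent (fun u : U => ∑ a, ∑ b, p (a, b, u)) := by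
  set p1 : X1 → U → ℝ := fun a u => ∑ b, p (a, b, u) with hp1d
  set p2 : X2 → U → ℝ := fun b u => ∑ a, p (a, b, u) with hp2d
  set pu : U → ℝ := fun u => ∑ a, ∑ b, p (a, b, u) with hpud
  have hp10 : ∀ a u, 0 ≤ p1 a u := fun a u => Finset.sum_nonneg fun _ _ => hp0 _
  have hp20 : ∀ b u, 0 ≤ p2 b u := fun b u => Finset.sum_nonneg fun _ _ => hp0 _
  have key : ∀ a b u, p (a, b, u) * Real.logb 2 (p (a, b, u))
      = p (a, b, u) * Real.logb 2 (p1 a u) + p (a, b, u) * Real.logb 2 (p2 b u)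
        - p (a, b, u) * Real.logb 2 (pu u) := by
    intro a b u
    by_cases h : p (a, b, u) = 0
    · simp [h]
    · have hq : 0 < p (a, b, u) := lt_of_le_of_ne (hp0 _) (Ne.symm h)
      have h1 : 0 < p1 a u :=
        lt_of_lt_of_le hq (Finset.single_le_sum (fun i _ => hp0 (a, i, u)) (mem_univ b))
      have h2 : 0 < p2 b u :=
        lt_of_lt_of_le hq (Finset.single_le_sum (fun i _ => hp0 (i, b, u)) (mem_univ a))
      have hu : 0 < pu u :=
        lt_of_lt_of_le h1 (Finset.single_le_sum (fun i _ => hp10 i u) (mem_univ a))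
      have hp' : p (a, b, u) = p1 a u * p2 b u / pu u := by
        rw [eq_div_iff hu.ne']
        exact hMarkov a b u
      rw [show Real.logb 2 (p (a, b, u))
          = Real.logb 2 (p1 a u) + Real.logb 2 (p2 b u) - Real.logb 2 (pu u) by
        rw [hp', Real.logb_div (mul_pos h1 h2).ne' hu.ne', Real.logb_mul h1.ne' h2.ne']]
      ring
  unfold Hent
  simp only [Fintype.sum_prod_type]
  have e1 : ∀ (f : X1 → U → ℝ), ∑ a : X1, ∑ u : U, (∑ b, p (a, b, u)) * f a u
      = ∑ a, ∑ b, ∑ u, p (a, b, u) * f a u := by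
    intro f
    refine Finset.sum_congr rfl fun a _ => ?_
    rw [Finset.sum_comm]
    exact Finset.sum_congr rfl fun u _ => Finset.sum_mul _ _ _
  have e2 : ∀ (f : X2 → U → ℝ), ∑ b : X2, ∑ u : U, (∑ a, p (a, b, u)) * f b u
      = ∑ a, ∑ b, ∑ u, p (a, b, u) * f b u := by
    intro f
    rw [← sum_rot (fun b u a => p (a, b, u) * f b u)]
    exact Finset.sum_congr rfl fun b _ => Finset.sum_congr rfl fun u _ =>
      Finset.sum_mul _ _ _
  have e3 : ∀ (f : U → ℝ), ∑ u : U, (∑ a, ∑ b, p (a, b, u)) * f u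
      = ∑ a, ∑ b, ∑ u, p (a, b, u) * f u := by
    intro f
    rw [sum_rot (fun a b u => p (a, b, u) * f u)]
    refine Finset.sum_congr rfl fun u _ => ?_
    rw [Finset.sum_mul]
    exact Finset.sum_congr rfl fun a _ => Finset.sum_mul _ _ _
  rw [e1 (fun a u => Real.logb 2 (p1 a u)), e2 (fun b u => Real.logb 2 (p2 b u)),
    e3 (fun u => Real.logb 2 (pu u))]
  have : ∑ a, ∑ b, ∑ u, p (a, b, u) * Real.logb 2 (p (a, b, u))
      = (∑ a, ∑ b, ∑ u, p (a, b, u) * Real.logb 2 (p1 a u))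
        + (∑ a, ∑ b, ∑ u, p (a, b, u) * Real.logb 2 (p2 b u))
        - (∑ a, ∑ b, ∑ u, p (a, b, u) * Real.logb 2 (pu u)) := by
    simp only [key, Finset.sum_add_distrib, Finset.sum_sub_distrib]
  rw [this]
  ring

lemma hent_comp_equiv {α β : Type*} [Fintype α] [Fintype β] (e : α ≃ β) (q : β → ℝ) :
    Hent (fun a => q (e a)) = Hent q := by
  unfold Hent
  rw [← Equiv.sum_comp e (fun b => q b * Real.logb 2 (q b))]

/-- If `X₁ ↔ U ↔ X₂` is a Markov chain (conditional independence of `X₁,X₂` given `U`),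
then `I(X₁,X₂;U) ≥ I(X₁;X₂)` (lower bound on Wyner's common information). -/
theorem stmt5 {X1 X2 U : Type*} [Fintype X1] [Fintype X2] [Fintype U]
    (p : X1 × X2 × U → ℝ) (hp0 : ∀ x, 0 ≤ p x) (hp1 : ∑ x, p x = 1)
    (hMarkov : ∀ x1 x2 u, p (x1, x2, u) * (∑ a, ∑ b, p (a, b, u))
        = (∑ b, p (x1, b, u)) * (∑ a, p (a, x2, u))) :
    MI (fun x : X1 × X2 => ∑ u, p (x.1, x.2, u))
      ≤ MI (fun x : (X1 × X2) × U => p (x.1.1, x.1.2, x.2)) := by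
  -- named entropy quantities
  set A1 : ℝ := Hent (fun a : X1 => ∑ b, ∑ u, p (a, b, u)) with hA1
  set A2 : ℝ := Hent (fun b : X2 => ∑ a, ∑ u, p (a, b, u)) with hA2
  set A12 : ℝ := Hent (fun x : X1 × X2 => ∑ u, p (x.1, x.2, u)) with hA12
  set H12U : ℝ := Hent (fun x : (X1 × X2) × U => p (x.1.1, x.1.2, x.2)) with hH12U
  set B1 : ℝ := Hent (fun y : X1 × U => ∑ b, p (y.1, b, y.2)) with hB1
  set B2 : ℝ := Hent (fun y : X2 × U => ∑ a, p (a, y.1, y.2)) with hB2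
  set BU : ℝ := Hent (fun u : U => ∑ a, ∑ b, p (a, b, u)) with hBU
  -- the goal in terms of the named quantities
  have hgoal : MI (fun x : X1 × X2 => ∑ u, p (x.1, x.2, u)) = A1 + A2 - A12 := by
    unfold MI
    rw [hA1, hA2, hA12]
  have hgoal2 : MI (fun x : (X1 × X2) × U => p (x.1.1, x.1.2, x.2))
      = A12 + BU - H12U := by
    unfold MI
    rw [hA12, hH12U, hBU]
    congr 2
    · exact congrArg Hent (funext fun u => by
        simpa using (Fintype.sum_prod_type (f := fun x : X1 × X2 => p (x.1, x.2, u))))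
  rw [hgoal, hgoal2]
  -- Markov identity
  have hM : H12U = B1 + B2 - BU := markov_hent p hp0 hMarkov
  -- first CMI inequality:  I(U;X1|X2) ≥ 0 in the Markov-substituted form
  have hC1 := cmi_core (fun z : U × X1 × X2 => p (z.2.1, z.2.2, z.1))
    (fun z => hp0 _)
  have hq1 : Hent (fun z : U × X1 × X2 => p (z.2.1, z.2.2, z.1)) = H12U := by
    rw [hH12U]
    exact (hent_comp_equiv
      (⟨fun x : (X1 × X2) × U => (x.2, x.1.1, x.1.2),
        fun z => ((z.2.1, z.2.2), z.1), fun x => rfl, fun z => rfl⟩ :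
        ((X1 × X2) × U) ≃ (U × X1 × X2))
      (fun z : U × X1 × X2 => p (z.2.1, z.2.2, z.1))).symm
  have hm1 : Hent (fun c : X2 => ∑ a : U, ∑ b : X1, p (b, c, a)) = A2 := by
    rw [hA2]
    exact congrArg Hent (funext fun c => Finset.sum_comm)
  have hm2 : Hent (fun ac : U × X2 => ∑ b : X1, p (b, ac.2, ac.1)) = B2 := by
    rw [hB2]
    exact (hent_comp_equiv (Equiv.prodComm X2 U)
      (fun ac : U × X2 => ∑ b : X1, p (b, ac.2, ac.1))).symm
  have hm3 : Hent (fun bc : X1 × X2 => ∑ a : U, p (bc.1, bc.2, a)) = A12 := by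
    rw [hA12]
  rw [hq1, hm1, hm2, hm3] at hC1
  -- second CMI inequality: I(U;X2|X1) ≥ 0
  have hC2 := cmi_core (fun z : U × X2 × X1 => p (z.2.2, z.2.1, z.1))
    (fun z => hp0 _)
  have hq2 : Hent (fun z : U × X2 × X1 => p (z.2.2, z.2.1, z.1)) = H12U := by
    rw [hH12U]
    exact (hent_comp_equiv
      (⟨fun x : (X1 × X2) × U => (x.2, x.1.2, x.1.1),
        fun z => ((z.2.2, z.2.1), z.1), fun x => rfl, fun z => rfl⟩ :
        ((X1 × X2) × U) ≃ (U × X2 × X1))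
      (fun z : U × X2 × X1 => p (z.2.2, z.2.1, z.1))).symm
  have hn1 : Hent (fun c : X1 => ∑ a : U, ∑ b : X2, p (c, b, a)) = A1 := by
    rw [hA1]
    exact congrArg Hent (funext fun c => Finset.sum_comm)
  have hn2 : Hent (fun ac : U × X1 => ∑ b : X2, p (ac.2, b, ac.1)) = B1 := by
    rw [hB1]
    exact (hent_comp_equiv (Equiv.prodComm X1 U)
      (fun ac : U × X1 => ∑ b : X2, p (ac.2, b, ac.1))).symm
  have hn3 : Hent (fun bc : X2 × X1 => ∑ a : U, p (bc.2, bc.1, a)) = A12 := by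
    rw [hA12]
    exact (hent_comp_equiv (Equiv.prodComm X1 X2)
      (fun bc : X2 × X1 => ∑ a : U, p (bc.2, bc.1, a))).symm
  rw [hq2, hn1, hn2, hn3] at hC2
  linarith
end

section
/- Let (X₀, X₁, X₂, U₀, U₁, U₂) be discrete random variables on finite alphabets satisfying the Markov chains X₁ ↔ X₀ ↔ (U₀,U₁,U₂), X₂ ↔ X₀ ↔ (U₀,U₁,U₂), and additionally U₁ ↔ (X₀,U₀) ↔ U₂. Then I(X₀; U₀, U₁, U₂) + I(U₁; U₂ | U₀) = I(X₀; U₀) + I(X₀; U₁ | U₀) + I(X₀; U₂ | U₀). -/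
open Finset Real
open scoped Classical BigOperators

section swaps
variable {A B C D : Type*} [Fintype A] [Fintype B] [Fintype C] [Fintype D]

lemma swap_in (f : A → B → C → ℝ) :
    ∑ a, ∑ b, ∑ c, f a b c = ∑ a, ∑ c, ∑ b, f a b c :=
  Finset.sum_congr rfl fun _ _ => Finset.sum_comm

lemma rot3 (f : A → B → C → ℝ) :
    ∑ a, ∑ b, ∑ c, f a b c = ∑ c, ∑ a, ∑ b, f a b c := by
  rw [swap_in, Finset.sum_comm]

lemma swap4 (f : A → B → C → D → ℝ) :
    ∑ a, ∑ b, ∑ c, ∑ d, f a b c d = ∑ c, ∑ d, ∑ a, ∑ b, f a b c d := by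
  have h1 : ∑ a, ∑ b, ∑ c, ∑ d, f a b c d = ∑ a, ∑ c, ∑ d, ∑ b, f a b c d := by
    refine Finset.sum_congr rfl fun a _ => ?_
    rw [Finset.sum_comm]
    exact Finset.sum_congr rfl fun c _ => Finset.sum_comm
  rw [h1, Finset.sum_comm]
  exact Finset.sum_congr rfl fun c _ => Finset.sum_comm
end swaps

lemma key {A B C D : Type*} [Fintype A] [Fintype B] [Fintype C] [Fintype D]
    (q : A → B → C → D → ℝ) (h0 : ∀ a b c d, 0 ≤ q a b c d)
    (hfac : ∀ a b c d, q a b c d * (∑ c', ∑ d', q a b c' d')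
      = (∑ d', q a b c d') * (∑ c', q a b c' d)) :
    (∑ a, ∑ b, ∑ c, ∑ d, q a b c d * Real.logb 2 (q a b c d))
      + (∑ a, ∑ b, (∑ c, ∑ d, q a b c d) * Real.logb 2 (∑ c, ∑ d, q a b c d))
    = (∑ a, ∑ b, ∑ c, (∑ d, q a b c d) * Real.logb 2 (∑ d, q a b c d))
      + (∑ a, ∑ b, ∑ d, (∑ c, q a b c d) * Real.logb 2 (∑ c, q a b c d)) := by
  have expand2 : ∀ a b, (∑ c, ∑ d, q a b c d) * Real.logb 2 (∑ c, ∑ d, q a b c d)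
      = ∑ c, ∑ d, q a b c d * Real.logb 2 (∑ c', ∑ d', q a b c' d') := by
    intro a b; rw [Finset.sum_mul]; exact Finset.sum_congr rfl fun c _ => Finset.sum_mul _ _ _
  have expandt : ∀ a b c, (∑ d, q a b c d) * Real.logb 2 (∑ d, q a b c d)
      = ∑ d, q a b c d * Real.logb 2 (∑ d', q a b c d') := fun a b c => Finset.sum_mul _ _ _
  have expandw : ∀ a b d, (∑ c, q a b c d) * Real.logb 2 (∑ c, q a b c d)
      = ∑ c, q a b c d * Real.logb 2 (∑ c', q a b c' d) := fun a b d => Finset.sum_mul _ _ _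
  simp_rw [expand2, expandt, expandw]
  have hsw : ∀ a b, ∑ d, ∑ c, q a b c d * Real.logb 2 (∑ c', q a b c' d)
      = ∑ c, ∑ d, q a b c d * Real.logb 2 (∑ c', q a b c' d) := fun a b => Finset.sum_comm
  simp_rw [hsw]
  have main : ∑ a, ∑ b, ∑ c, ∑ d,
      (q a b c d * Real.logb 2 (q a b c d)
        + q a b c d * Real.logb 2 (∑ c', ∑ d', q a b c' d'))
    = ∑ a, ∑ b, ∑ c, ∑ d,
      (q a b c d * Real.logb 2 (∑ d', q a b c d')
        + q a b c d * Real.logb 2 (∑ c', q a b c' d)) := by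
    refine Finset.sum_congr rfl fun a _ => Finset.sum_congr rfl fun b _ =>
      Finset.sum_congr rfl fun c _ => Finset.sum_congr rfl fun d _ => ?_
    rcases eq_or_lt_of_le (h0 a b c d) with h | h
    · simp [← h]
    · have ht : 0 < ∑ d', q a b c d' :=
        lt_of_lt_of_le h (Finset.single_le_sum (fun d' _ => h0 a b c d') (mem_univ d))
      have hw : 0 < ∑ c', q a b c' d :=
        lt_of_lt_of_le h (Finset.single_le_sum (fun c' _ => h0 a b c' d) (mem_univ c))
      have hm : 0 < ∑ c', ∑ d', q a b c' d' :=
        lt_of_lt_of_le ht (Finset.single_le_sum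
          (fun c' _ => Finset.sum_nonneg fun d' _ => h0 a b c' d') (mem_univ c))
      rw [← mul_add, ← mul_add, ← Real.logb_mul (ne_of_gt h) (ne_of_gt hm),
        ← Real.logb_mul (ne_of_gt ht) (ne_of_gt hw), hfac a b c d]
  simp only [Finset.sum_add_distrib] at main
  exact main


/-- Under `X₁ ↔ X₀ ↔ (U₀,U₁,U₂)`, `X₂ ↔ X₀ ↔ (U₀,U₁,U₂)` and
`U₁ ↔ (X₀,U₀) ↔ U₂`, one has
`I(X₀;U₀,U₁,U₂) + I(U₁;U₂|U₀) = I(X₀;U₀) + I(X₀;U₁|U₀) + I(X₀;U₂|U₀)`. -/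
theorem stmt11 {X0 X1 X2 U0 U1 U2 : Type*}
    [Fintype X0] [Fintype X1] [Fintype X2] [Fintype U0] [Fintype U1] [Fintype U2]
    (p : X0 → X1 → X2 → U0 → U1 → U2 → ℝ)
    (hp0 : ∀ a b c u0 u1 u2, 0 ≤ p a b c u0 u1 u2)
    (hp1 : ∑ a, ∑ b, ∑ c, ∑ u0, ∑ u1, ∑ u2, p a b c u0 u1 u2 = 1)
    -- X₁ ↔ X₀ ↔ (U₀,U₁,U₂)
    (hM1 : ∀ a b u0 u1 u2,
      (∑ c, p a b c u0 u1 u2) * (∑ b', ∑ c', ∑ v0, ∑ v1, ∑ v2, p a b' c' v0 v1 v2)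
        = (∑ c', ∑ v0, ∑ v1, ∑ v2, p a b c' v0 v1 v2)
          * (∑ b', ∑ c', p a b' c' u0 u1 u2))
    -- X₂ ↔ X₀ ↔ (U₀,U₁,U₂)
    (hM2 : ∀ a c u0 u1 u2,
      (∑ b, p a b c u0 u1 u2) * (∑ b', ∑ c', ∑ v0, ∑ v1, ∑ v2, p a b' c' v0 v1 v2)
        = (∑ b', ∑ v0, ∑ v1, ∑ v2, p a b' c v0 v1 v2)
          * (∑ b', ∑ c', p a b' c' u0 u1 u2))
    -- U₁ ↔ (X₀,U₀) ↔ U₂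
    (hM3 : ∀ a u0 u1 u2,
      (∑ b, ∑ c, p a b c u0 u1 u2) * (∑ b, ∑ c, ∑ v1, ∑ v2, p a b c u0 v1 v2)
        = (∑ b, ∑ c, ∑ v2, p a b c u0 u1 v2)
          * (∑ b, ∑ c, ∑ v1, p a b c u0 v1 u2)) :
    MI (fun x : X0 × (U0 × U1 × U2) =>
        ∑ b, ∑ c, p x.1 b c x.2.1 x.2.2.1 x.2.2.2)
      + CMI (fun x : U1 × U2 × U0 =>
        ∑ a, ∑ b, ∑ c, p a b c x.2.2 x.1 x.2.1)
    = MI (fun x : X0 × U0 => ∑ b, ∑ c, ∑ v1, ∑ v2, p x.1 b c x.2 v1 v2)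
      + CMI (fun x : X0 × U1 × U0 => ∑ b, ∑ c, ∑ v2, p x.1 b c x.2.2 x.2.1 v2)
      + CMI (fun x : X0 × U2 × U0 => ∑ b, ∑ c, ∑ v1, p x.1 b c x.2.2 v1 x.2.1) := by
  classical
  have N_a : ∀ (a : X0) (u0 : U0), ∑ b, ∑ c, ∑ v1, ∑ v2, p a b c u0 v1 v2
      = ∑ v1, ∑ v2, ∑ b, ∑ c, p a b c u0 v1 v2 := fun a u0 =>
    swap4 (fun b c v1 v2 => p a b c u0 v1 v2)
  have N_c : ∀ (a : X0) (u0 : U0) (u1 : U1), ∑ b, ∑ c, ∑ v2, p a b c u0 u1 v2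
      = ∑ v2, ∑ b, ∑ c, p a b c u0 u1 v2 := fun a u0 u1 =>
    rot3 (fun b c v2 => p a b c u0 u1 v2)
  have N_e : ∀ (a : X0) (u0 : U0) (u2 : U2), ∑ b, ∑ c, ∑ v1, p a b c u0 v1 u2
      = ∑ v1, ∑ b, ∑ c, p a b c u0 v1 u2 := fun a u0 u2 =>
    rot3 (fun b c v1 => p a b c u0 v1 u2)
  have N_b : ∀ (u0 : U0), ∑ u1 : U1, ∑ a : X0, ∑ u2 : U2, ∑ b, ∑ c, p a b c u0 u1 u2
      = ∑ a : X0, ∑ u1 : U1, ∑ u2 : U2, ∑ b, ∑ c, p a b c u0 u1 u2 := fun u0 =>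
    Finset.sum_comm
  have N_d : ∀ (u0 : U0) (u1 : U1), ∑ u2 : U2, ∑ a : X0, ∑ b, ∑ c, p a b c u0 u1 u2
      = ∑ a : X0, ∑ u2 : U2, ∑ b, ∑ c, p a b c u0 u1 u2 := fun _ _ => Finset.sum_comm
  have N_g : ∀ (u0 : U0) (u2 : U2), ∑ u1 : U1, ∑ a : X0, ∑ b, ∑ c, p a b c u0 u1 u2
      = ∑ a : X0, ∑ u1 : U1, ∑ b, ∑ c, p a b c u0 u1 u2 := fun _ _ => Finset.sum_comm
  have N_f : ∀ (a : X0) (u0 : U0), ∑ v2 : U2, ∑ v1 : U1, ∑ b, ∑ c, p a b c u0 v1 v2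
      = ∑ v1 : U1, ∑ v2 : U2, ∑ b, ∑ c, p a b c u0 v1 v2 := fun _ _ => Finset.sum_comm
  have keyI : (∑ a : X0, ∑ u0 : U0, ∑ u1 : U1, ∑ u2 : U2,
        (∑ b, ∑ c, p a b c u0 u1 u2) * Real.logb 2 (∑ b, ∑ c, p a b c u0 u1 u2))
      + (∑ a : X0, ∑ u0 : U0,
        (∑ u1 : U1, ∑ u2 : U2, ∑ b, ∑ c, p a b c u0 u1 u2)
          * Real.logb 2 (∑ u1 : U1, ∑ u2 : U2, ∑ b, ∑ c, p a b c u0 u1 u2))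
      = (∑ a : X0, ∑ u0 : U0, ∑ u1 : U1,
        (∑ u2 : U2, ∑ b, ∑ c, p a b c u0 u1 u2)
          * Real.logb 2 (∑ u2 : U2, ∑ b, ∑ c, p a b c u0 u1 u2))
      + (∑ a : X0, ∑ u0 : U0, ∑ u2 : U2,
        (∑ u1 : U1, ∑ b, ∑ c, p a b c u0 u1 u2)
          * Real.logb 2 (∑ u1 : U1, ∑ b, ∑ c, p a b c u0 u1 u2)) :=
    key (fun a u0 u1 u2 => ∑ b, ∑ c, p a b c u0 u1 u2)
    (fun a u0 u1 u2 => Finset.sum_nonneg fun b _ => Finset.sum_nonneg fun c _ => hp0 a b c u0 u1 u2)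
    (by
      intro a u0 u1 u2
      have h := hM3 a u0 u1 u2
      rw [N_a, N_c, N_e] at h
      simpa using h)

  have e1 : ∑ u1 : U1, ∑ u2 : U2, ∑ u0 : U0,
        (∑ a : X0, ∑ b, ∑ c, p a b c u0 u1 u2)
          * Real.logb 2 (∑ a : X0, ∑ b, ∑ c, p a b c u0 u1 u2)
      = ∑ u0 : U0, ∑ u1 : U1, ∑ u2 : U2,
        (∑ a : X0, ∑ b, ∑ c, p a b c u0 u1 u2)
          * Real.logb 2 (∑ a : X0, ∑ b, ∑ c, p a b c u0 u1 u2) :=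
    rot3 (fun u1 u2 u0 => (∑ a : X0, ∑ b, ∑ c, p a b c u0 u1 u2)
      * Real.logb 2 (∑ a : X0, ∑ b, ∑ c, p a b c u0 u1 u2))
  have e2 : ∑ a : X0, ∑ u1 : U1, ∑ u0 : U0,
        (∑ v2 : U2, ∑ b, ∑ c, p a b c u0 u1 v2)
          * Real.logb 2 (∑ v2 : U2, ∑ b, ∑ c, p a b c u0 u1 v2)
      = ∑ a : X0, ∑ u0 : U0, ∑ u1 : U1,
        (∑ v2 : U2, ∑ b, ∑ c, p a b c u0 u1 v2)
          * Real.logb 2 (∑ v2 : U2, ∑ b, ∑ c, p a b c u0 u1 v2) :=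
    swap_in _
  have e3 : ∑ a : X0, ∑ u2 : U2, ∑ u0 : U0,
        (∑ v1 : U1, ∑ b, ∑ c, p a b c u0 v1 u2)
          * Real.logb 2 (∑ v1 : U1, ∑ b, ∑ c, p a b c u0 v1 u2)
      = ∑ a : X0, ∑ u0 : U0, ∑ u2 : U2,
        (∑ v1 : U1, ∑ b, ∑ c, p a b c u0 v1 u2)
          * Real.logb 2 (∑ v1 : U1, ∑ b, ∑ c, p a b c u0 v1 u2) :=
    swap_in _
  simp only [MI, CMI, Hent, Fintype.sum_prod_type]
  simp_rw [N_c, N_e, N_a, N_d, N_g, N_f, N_b]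

  linarith [keyI, e1, e2, e3]
end
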